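/- For every θ ∈ [−π, −arccos((−1+√3)/2)] ∪ [arccos((−1+√3)/2), π], the matrix H′(θ) is equivalent to H(θ); here H′(θ) is obtained from the same template as H(θ) but with the opposite sign of the square root: x′ = (1+2y+y² + √2·√(1+2y+2y³+y⁴))/(1+2y−y²) and t′ = (1+2y+y² + √2·√(1+2y+2y³+y⁴))/(−1+2y+y²), with the same y = exp(iθ) and z = (1+2y−y²)/(y(−1+2y+y²)). -/

import Mathlib

open Complex Matrix ComplexConjugate

/-- A complex Hadamard matrix of order `n`: all entries of absolute value 1
and pairwise orthogonal rows, i.e. `H Hᴴ = n·1`. -/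
def IsHadamard {n : ℕ} (H : Matrix (Fin n) (Fin n) ℂ) : Prop :=
  (∀ i j, ‖H i j‖ = 1) ∧ H * Hᴴ = (n : ℂ) • 1

/-- Equivalence of complex Hadamard matrices: `H₂ = P₁ D₁ H₁ D₂ P₂` for unitary
diagonal matrices `D₁, D₂` and permutation matrices `P₁, P₂`. -/
def HadamardEquiv {n : ℕ} (H₁ H₂ : Matrix (Fin n) (Fin n) ℂ) : Prop :=
  ∃ (d₁ d₂ : Fin n → ℂ) (σ₁ σ₂ : Equiv.Perm (Fin n)),
    (∀ i, ‖d₁ i‖ = 1) ∧ (∀ i, ‖d₂ i‖ = 1) ∧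
    H₂ = (σ₁.permMatrix ℂ) * Matrix.diagonal d₁ * H₁ * Matrix.diagonal d₂ * (σ₂.permMatrix ℂ)

/-- The parameter set `[−π, −arccos((−1+√3)/2)] ∪ [arccos((−1+√3)/2), π]`. -/
noncomputable def ThetaSet : Set ℝ :=
  Set.Icc (-Real.pi) (-(Real.arccos ((-1 + Real.sqrt 3) / 2))) ∪
    Set.Icc (Real.arccos ((-1 + Real.sqrt 3) / 2)) Real.pi

/-- `y = exp(iθ)`. -/
noncomputable def Hy (θ : ℝ) : ℂ := Complex.exp (θ * Complex.I)

/-- `z = (1+2y−y²)/(y(−1+2y+y²))`. -/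
noncomputable def Hz (θ : ℝ) : ℂ :=
  (1 + 2 * Hy θ - (Hy θ) ^ 2) / (Hy θ * (-1 + 2 * Hy θ + (Hy θ) ^ 2))

/-- The square-root quantity `√2·√(1+2y+2y³+y⁴)` (principal branch of the
complex square root, realized as the complex power `w ^ (1/2)`). -/
noncomputable def Hs (θ : ℝ) : ℂ :=
  (Real.sqrt 2 : ℂ) * (1 + 2 * Hy θ + 2 * (Hy θ) ^ 3 + (Hy θ) ^ 4) ^ ((1 : ℂ) / 2)

/-- `x = (1+2y+y² − √2√(1+2y+2y³+y⁴))/(1+2y−y²)`. -/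
noncomputable def Hx (θ : ℝ) : ℂ :=
  (1 + 2 * Hy θ + (Hy θ) ^ 2 - Hs θ) / (1 + 2 * Hy θ - (Hy θ) ^ 2)

/-- `t = (1+2y+y² − √2√(1+2y+2y³+y⁴))/(−1+2y+y²)`. -/
noncomputable def Ht (θ : ℝ) : ℂ :=
  (1 + 2 * Hy θ + (Hy θ) ^ 2 - Hs θ) / (-1 + 2 * Hy θ + (Hy θ) ^ 2)

/-- The matrix `H(θ)`. -/
noncomputable def Hmat (θ : ℝ) : Matrix (Fin 6) (Fin 6) ℂ :=
  !![1, 1, 1, 1, 1, 1;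
     1, -1, conj (Hx θ), -(Hy θ), -(conj (Hx θ)), Hy θ;
     1, Hx θ, -1, Ht θ, -(Ht θ), -(Hx θ);
     1, -(conj (Hy θ)), conj (Ht θ), -1, conj (Hy θ), -(conj (Ht θ));
     1, -(Hx θ), -(conj (Ht θ)), Hy θ, 1, conj (Hz θ);
     1, conj (Hy θ), -(conj (Hx θ)), -(Ht θ), Hz θ, 1]

/-- `x′ = (1+2y+y² + √2√(1+2y+2y³+y⁴))/(1+2y−y²)`. -/
noncomputable def Hx' (θ : ℝ) : ℂ :=
  (1 + 2 * Hy θ + (Hy θ) ^ 2 + Hs θ) / (1 + 2 * Hy θ - (Hy θ) ^ 2)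

/-- `t′ = (1+2y+y² + √2√(1+2y+2y³+y⁴))/(−1+2y+y²)`. -/
noncomputable def Ht' (θ : ℝ) : ℂ :=
  (1 + 2 * Hy θ + (Hy θ) ^ 2 + Hs θ) / (-1 + 2 * Hy θ + (Hy θ) ^ 2)

/-- The matrix `H′(θ)`, with the opposite sign of the square root. -/
noncomputable def Hmat' (θ : ℝ) : Matrix (Fin 6) (Fin 6) ℂ :=
  !![1, 1, 1, 1, 1, 1;
     1, -1, conj (Hx' θ), -(Hy θ), -(conj (Hx' θ)), Hy θ;
     1, Hx' θ, -1, Ht' θ, -(Ht' θ), -(Hx' θ);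
     1, -(conj (Hy θ)), conj (Ht' θ), -1, conj (Hy θ), -(conj (Ht' θ));
     1, -(Hx' θ), -(conj (Ht' θ)), Hy θ, 1, conj (Hz θ);
     1, conj (Hy θ), -(conj (Hx' θ)), -(Ht' θ), Hz θ, 1]

lemma Hy_ne_zero (θ : ℝ) : Hy θ ≠ 0 := Complex.exp_ne_zero _

lemma conj_Hy (θ : ℝ) : conj (Hy θ) = (Hy θ)⁻¹ := by
  rw [Hy, ← Complex.exp_conj, ← Complex.exp_neg]
  congr 1
  simp [Complex.conj_ofReal]

lemma abs_Hy (θ : ℝ) : ‖Hy θ‖ = 1 := by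
  simp [Hy, Complex.norm_exp]

lemma hD (θ : ℝ) : 1 + 2 * Hy θ - (Hy θ) ^ 2 ≠ 0 := by
  have h1 : 1 + 2 * Hy θ - (Hy θ) ^ 2 = Hy θ * (2 - (2 * (Hy θ).im) * Complex.I) := by
    have h2 : (Hy θ) - conj (Hy θ) = (2 * (Hy θ).im : ℝ) * Complex.I := Complex.sub_conj _
    have h3 := conj_Hy θ
    have h0 := Hy_ne_zero θ
    field_simp at h2 h3 ⊢
    rw [← h3]
    push_cast at h2 ⊢
    linear_combination (-(Hy θ)) * h2 + (-2 * Hy θ) * h3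
  rw [h1]
  refine mul_ne_zero (Hy_ne_zero θ) ?_
  intro h
  have := congrArg Complex.re h
  simp at this

lemma hD' (θ : ℝ) : -1 + 2 * Hy θ + (Hy θ) ^ 2 ≠ 0 := by
  have h1 : -1 + 2 * Hy θ + (Hy θ) ^ 2 = Hy θ * (2 + (2 * (Hy θ).im) * Complex.I) := by
    have h2 : (Hy θ) - conj (Hy θ) = (2 * (Hy θ).im : ℝ) * Complex.I := Complex.sub_conj _
    have h3 := conj_Hy θ
    have h0 := Hy_ne_zero θ
    field_simp at h2 h3 ⊢
    rw [← h3]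
    push_cast at h2 ⊢
    linear_combination (Hy θ) * h2 + (-2 * Hy θ) * h3
  rw [h1]
  refine mul_ne_zero (Hy_ne_zero θ) ?_
  intro h
  have := congrArg Complex.re h
  simp at this

lemma Hs_sq (θ : ℝ) : (Hs θ) ^ 2 = 2 * (1 + 2 * Hy θ + 2 * (Hy θ) ^ 3 + (Hy θ) ^ 4) := by
  set w : ℂ := 1 + 2 * Hy θ + 2 * (Hy θ) ^ 3 + (Hy θ) ^ 4 with hw
  have h2 : ((Real.sqrt 2 : ℂ)) ^ 2 = 2 := by
    rw [← Complex.ofReal_pow, Real.sq_sqrt (by norm_num : (2:ℝ) ≥ 0).le]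
    norm_num
  by_cases h0 : w = 0
  · rw [Hs, ← hw, h0, Complex.zero_cpow (by norm_num : (1:ℂ)/2 ≠ 0)]
    ring
  · have : (w ^ ((1:ℂ)/2)) ^ 2 = w := by
      rw [sq, ← Complex.cpow_add _ _ h0]
      norm_num
    rw [Hs, mul_pow, h2, this]

lemma w_eq (θ : ℝ) : 1 + 2 * Hy θ + 2 * (Hy θ) ^ 3 + (Hy θ) ^ 4
    = ((4 * Real.cos θ ^ 2 + 4 * Real.cos θ - 2 : ℝ) : ℂ) * (Hy θ) ^ 2 := by
  have hc1 : ((Real.cos θ : ℝ) : ℂ) = (Hy θ + (Hy θ)⁻¹) / 2 := by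
    rw [Complex.ofReal_cos, Complex.cos, Hy, ← Complex.exp_neg]
    ring_nf
  have hcast : ((4 * Real.cos θ ^ 2 + 4 * Real.cos θ - 2 : ℝ) : ℂ)
      = 4 * ((Real.cos θ : ℝ) : ℂ) ^ 2 + 4 * ((Real.cos θ : ℝ) : ℂ) - 2 := by
    push_cast; ring
  have h0 := Hy_ne_zero θ
  rw [hcast, hc1]
  field_simp
  ring

lemma r_nonpos {θ : ℝ} (hθ : θ ∈ ThetaSet) : 4 * Real.cos θ ^ 2 + 4 * Real.cos θ - 2 ≤ 0 := by
  have h3 : Real.sqrt 3 ^ 2 = 3 := Real.sq_sqrt (by norm_num)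
  have h3n : 0 ≤ Real.sqrt 3 := Real.sqrt_nonneg 3
  have h3lt : Real.sqrt 3 < 2 := by nlinarith
  have h3gt : 1 ≤ Real.sqrt 3 := by nlinarith
  have ha1 : (-1 + Real.sqrt 3) / 2 ≤ 1 := by nlinarith
  have ha2 : -1 ≤ (-1 + Real.sqrt 3) / 2 := by nlinarith
  have hcos : Real.cos θ ≤ (-1 + Real.sqrt 3) / 2 := by
    rcases hθ with h | h
    · rw [← Real.cos_neg, ← Real.cos_arccos ha2 ha1]
      apply Real.cos_le_cos_of_nonneg_of_le_pi (Real.arccos_nonneg _)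
      · linarith [h.1]
      · linarith [h.2]
    · rw [← Real.cos_arccos ha2 ha1]
      apply Real.cos_le_cos_of_nonneg_of_le_pi (Real.arccos_nonneg _)
      · exact h.2
      · exact h.1
  have hcos2 : -1 ≤ Real.cos θ := Real.neg_one_le_cos θ
  nlinarith [mul_nonneg (by linarith : (0:ℝ) ≤ (-1 + Real.sqrt 3) / 2 - Real.cos θ)
    (by linarith : (0:ℝ) ≤ Real.cos θ - (-1 - Real.sqrt 3) / 2), h3]

lemma conj_Hs {θ : ℝ} (hθ : θ ∈ ThetaSet) :
    conj (Hs θ) = -Hs θ * (conj (Hy θ)) ^ 2 := by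
  set r : ℝ := 4 * Real.cos θ ^ 2 + 4 * Real.cos θ - 2 with hr
  set w : ℂ := 1 + 2 * Hy θ + 2 * (Hy θ) ^ 3 + (Hy θ) ^ 4 with hwdef
  have hw : w = (r : ℂ) * (Hy θ) ^ 2 := w_eq θ
  have hrle : r ≤ 0 := r_nonpos hθ
  have hy0 := Hy_ne_zero θ
  by_cases h0 : w = 0
  · rw [Hs, ← hwdef, h0, Complex.zero_cpow (by norm_num : (1:ℂ)/2 ≠ 0), mul_zero]
    simp
  · have hr0 : r ≠ 0 := by
      intro h
      apply h0
      rw [hw, h]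
      simp
    have hrneg : r < 0 := lt_of_le_of_ne hrle hr0
    have habs : (‖w‖ : ℝ) = -r := by
      rw [hw, norm_mul, norm_pow, abs_Hy, Complex.norm_real, Real.norm_eq_abs, abs_of_neg hrneg]
      ring
    have harg : Complex.exp ((Complex.arg w : ℂ) * Complex.I) = -(Hy θ) ^ 2 := by
      have h1 := Complex.norm_mul_exp_arg_mul_I w
      rw [habs] at h1
      have hrc : ((-r : ℝ) : ℂ) ≠ 0 := by
        simp [hr0]
      apply mul_left_cancel₀ hrc
      rw [h1, hw]
      push_cast
      ring
    have hclog : conj (Complex.log w) = Complex.log w - 2 * (Complex.arg w : ℂ) * Complex.I := by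
      have h2 := Complex.sub_conj (Complex.log w)
      rw [Complex.log_im] at h2
      push_cast at h2
      linear_combination -h2
    rw [Hs, ← hwdef, Complex.cpow_def_of_ne_zero h0]
    rw [_root_.map_mul, ← Complex.exp_conj, _root_.map_mul, hclog, Complex.conj_ofReal]
    have hconjhalf : conj ((1:ℂ)/2) = 1/2 := by
      rw [show ((1:ℂ)/2) = ((1/2 : ℝ) : ℂ) by norm_num, Complex.conj_ofReal]
    rw [hconjhalf]
    have hsplit : (Complex.log w - 2 * (Complex.arg w : ℂ) * Complex.I) * (1/2)
        = Complex.log w * (1/2) + (-((Complex.arg w : ℂ) * Complex.I)) := by ring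
    rw [hsplit, Complex.exp_add, Complex.exp_neg, harg, conj_Hy]
    have hy2 : (Hy θ)^2 ≠ 0 := pow_ne_zero _ hy0
    field_simp

lemma conj_two : conj (2 : ℂ) = 2 := by
  rw [show (2:ℂ) = ((2:ℝ):ℂ) by norm_num, Complex.conj_ofReal]

lemma conj_hD (θ : ℝ) : conj (1 + 2 * Hy θ - (Hy θ) ^ 2) ≠ 0 := by
  intro h
  apply hD θ
  have := congrArg conj h
  simpa using this

lemma conj_hD' (θ : ℝ) : conj (-1 + 2 * Hy θ + (Hy θ) ^ 2) ≠ 0 := by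
  intro h
  apply hD' θ
  have := congrArg conj h
  simpa using this

lemma conj_Hx {θ : ℝ} (hθ : θ ∈ ThetaSet) : conj (Hx θ) = Ht' θ := by
  have hy0 := Hy_ne_zero θ
  rw [Hx, Ht', map_div₀, div_eq_div_iff (conj_hD θ) (hD' θ)]
  simp only [map_sub, map_add, _root_.map_one, _root_.map_mul, map_pow, conj_two, conj_Hy, conj_Hs hθ]
  field_simp
  ring

lemma conj_Ht {θ : ℝ} (hθ : θ ∈ ThetaSet) : conj (Ht θ) = Hx' θ := by
  have hy0 := Hy_ne_zero θ
  rw [Ht, Hx', map_div₀, div_eq_div_iff (conj_hD' θ) (hD θ)]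
  simp only [map_sub, map_add, _root_.map_one, _root_.map_mul, map_pow, map_neg, conj_two,
    conj_Hy, conj_Hs hθ]
  field_simp
  ring

lemma Hx_mul_Ht' (θ : ℝ) : Hx θ * Ht' θ = 1 := by
  rw [Hx, Ht', div_mul_div_comm, div_eq_one_iff_eq (mul_ne_zero (hD θ) (hD' θ))]
  linear_combination -Hs_sq θ

lemma Ht_mul_Hx' (θ : ℝ) : Ht θ * Hx' θ = 1 := by
  rw [Ht, Hx', div_mul_div_comm, div_eq_one_iff_eq (mul_ne_zero (hD' θ) (hD θ))]
  linear_combination -Hs_sq θ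

lemma Hx_ne_zero (θ : ℝ) : Hx θ ≠ 0 := left_ne_zero_of_mul_eq_one (Hx_mul_Ht' θ)

lemma Ht_ne_zero (θ : ℝ) : Ht θ ≠ 0 := left_ne_zero_of_mul_eq_one (Ht_mul_Hx' θ)

lemma conj_Hx_inv {θ : ℝ} (hθ : θ ∈ ThetaSet) : conj (Hx θ) = (Hx θ)⁻¹ := by
  rw [conj_Hx hθ]
  exact eq_inv_of_mul_eq_one_right (Hx_mul_Ht' θ)

lemma conj_Ht_inv {θ : ℝ} (hθ : θ ∈ ThetaSet) : conj (Ht θ) = (Ht θ)⁻¹ := by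
  rw [conj_Ht hθ]
  exact eq_inv_of_mul_eq_one_right (Ht_mul_Hx' θ)

lemma abs_Hx {θ : ℝ} (hθ : θ ∈ ThetaSet) : ‖Hx θ‖ = 1 := by
  have h1 : Hx θ * conj (Hx θ) = 1 := by
    rw [conj_Hx hθ]; exact Hx_mul_Ht' θ
  rw [Complex.mul_conj] at h1
  have h2 : Complex.normSq (Hx θ) = 1 := by exact_mod_cast h1
  rw [← Complex.sq_norm] at h2
  nlinarith [norm_nonneg (Hx θ)]

lemma Ht_eq (θ : ℝ) : Ht θ = Hx θ * Hy θ * Hz θ := by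
  have hy0 := Hy_ne_zero θ
  rw [Ht, Hx, Hz]
  field_simp [hD θ, hD' θ]

lemma Hz_eq (θ : ℝ) : Hz θ = Ht θ * (Hx θ)⁻¹ * (Hy θ)⁻¹ := by
  have := Ht_eq θ
  field_simp [Hx_ne_zero θ, Hy_ne_zero θ]
  linear_combination -this

lemma conj_Hz {θ : ℝ} (hθ : θ ∈ ThetaSet) : conj (Hz θ) = Hx θ * Hy θ * (Ht θ)⁻¹ := by
  rw [Hz_eq, _root_.map_mul, _root_.map_mul, map_inv₀, map_inv₀, conj_Hx_inv hθ, conj_Ht_inv hθ, conj_Hy]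
  rw [inv_inv, inv_inv]
  ring

def pσ : Equiv.Perm (Fin 6) where
  toFun := ![3, 0, 5, 4, 2, 1]
  invFun := ![1, 5, 4, 0, 3, 2]
  left_inv := by decide
  right_inv := by decide

lemma perm_mul_apply (σ : Equiv.Perm (Fin 6)) (M : Matrix (Fin 6) (Fin 6) ℂ) (i j : Fin 6) :
    (σ.permMatrix ℂ * M) i j = M (σ i) j := by
  rw [Equiv.Perm.permMatrix, PEquiv.toMatrix_toPEquiv_mul]
  rfl

lemma mul_perm_apply (σ : Equiv.Perm (Fin 6)) (M : Matrix (Fin 6) (Fin 6) ℂ) (i j : Fin 6) :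
    (M * σ.permMatrix ℂ) i j = M i (σ.symm j) := by
  rw [Equiv.Perm.permMatrix, PEquiv.mul_toMatrix_toPEquiv]
  rfl

lemma cons_val_five {α : Type*} {m : ℕ} (x : α) (u : Fin (m+1+1+1+1+1) → α) :
    Matrix.vecCons x u 5 = Matrix.vecHead (Matrix.vecTail (Matrix.vecTail (Matrix.vecTail (Matrix.vecTail u)))) :=
  rfl

set_option maxHeartbeats 2000000 in
/-- For every `θ` in the parameter set, `H′(θ)` is equivalent
to `H(θ)`. -/
theorem Hmat'_equiv_Hmat (θ : ℝ) (hθ : θ ∈ ThetaSet) :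
    HadamardEquiv (Hmat' θ) (Hmat θ) := by
  unfold HadamardEquiv
  have hy0 := Hy_ne_zero θ
  have hx0 := Hx_ne_zero θ
  have ht0 := Ht_ne_zero θ
  refine ⟨![1, -(conj (Hy θ)), Hx θ, -1, conj (Hy θ), -(Hx θ)],
          ![-1, Hy θ, -(conj (Hx θ)), 1, -(Hy θ), conj (Hx θ)],
          pσ, pσ.symm, ?_, ?_, ?_⟩
  · intro i
    fin_cases i <;>
      simp [cons_val_five, Matrix.cons_val_succ, abs_Hy θ, abs_Hx hθ, Complex.norm_conj]
  · intro i
    fin_cases i <;>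
      simp [cons_val_five, Matrix.cons_val_succ, abs_Hy θ, abs_Hx hθ, Complex.norm_conj]
  · ext i j
    rw [mul_perm_apply, Matrix.mul_diagonal, Matrix.mul_assoc (pσ.permMatrix ℂ),
      perm_mul_apply, Matrix.diagonal_mul, Equiv.symm_symm]
    fin_cases i <;> fin_cases j <;>
      simp only [← conj_Ht hθ, ← conj_Hx hθ, Hz_eq θ, _root_.map_mul, map_inv₀,
        conj_Hx_inv hθ, conj_Ht_inv hθ, conj_Hy, inv_inv, Complex.conj_conj, Hmat, Hmat', pσ] <;>
      simp [cons_val_five, Matrix.vecHead, Matrix.vecTail] <;>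
      (try field_simp) <;>
      (try ring) <;> (try tauto)
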